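/- Fix A = (xA, yA) and B = (xB, yB) with xA < xB, and let f_p be the quadratic through A and B with leading coefficient p ≤ 0. If p1 < p2 ≤ 0, then the arc length of f_{p1} over [xA, xB] is strictly greater than the arc length of f_{p2} over [xA, xB]. -/

import Mathlib

private lemma wmono_aux (a b : ℝ) (hab : a < b) :
    a / Real.sqrt (1 + a ^ 2) < b / Real.sqrt (1 + b ^ 2) := by
  have ha : 0 < Real.sqrt (1 + a ^ 2) := Real.sqrt_pos.mpr (by positivity)
  have hb : 0 < Real.sqrt (1 + b ^ 2) := Real.sqrt_pos.mpr (by positivity)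
  have ha2 : Real.sqrt (1 + a ^ 2) ^ 2 = 1 + a ^ 2 := Real.sq_sqrt (by positivity)
  have hb2 : Real.sqrt (1 + b ^ 2) ^ 2 = 1 + b ^ 2 := Real.sq_sqrt (by positivity)
  rw [div_lt_div_iff₀ ha hb]
  rcases le_or_gt 0 a with h0 | h0
  · have hb0 : 0 < b := lt_of_le_of_lt h0 hab
    have hsq : (a * Real.sqrt (1 + b ^ 2)) ^ 2 < (b * Real.sqrt (1 + a ^ 2)) ^ 2 := by
      nlinarith
    nlinarith [mul_nonneg h0 hb.le, mul_pos hb0 ha]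
  · rcases le_or_gt b 0 with hb0 | hb0
    · have hsq : (b * Real.sqrt (1 + a ^ 2)) ^ 2 < (a * Real.sqrt (1 + b ^ 2)) ^ 2 := by
        nlinarith
      nlinarith [mul_nonneg (neg_nonneg.mpr hb0) ha.le, mul_pos (neg_pos.mpr h0) hb]
    · nlinarith [mul_pos (neg_pos.mpr h0) hb, mul_pos hb0 ha]

private lemma sqrt_comp_hasDerivAt_aux (S x : ℝ) :
    HasDerivAt (fun t => Real.sqrt (1 + (S + t) ^ 2))
      ((S + x) / Real.sqrt (1 + (S + x) ^ 2)) x := by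
  have hpos : (0:ℝ) < 1 + (S + x) ^ 2 := by positivity
  have hs : 0 < Real.sqrt (1 + (S + x) ^ 2) := Real.sqrt_pos.mpr hpos
  have h1 : HasDerivAt (fun t => 1 + (S + t) ^ 2) (2 * (S + x)) x := by
    have h0 : HasDerivAt (fun t : ℝ => S + t) 1 x := (hasDerivAt_id x).const_add S
    simpa using (h0.pow 2).const_add 1
  have := (Real.hasDerivAt_sqrt hpos.ne').comp x h1
  refine this.congr_deriv ?_
  field_simp

private lemma sqrt_comp_hasDerivAt'_aux (S x : ℝ) :
    HasDerivAt (fun t => Real.sqrt (1 + (S - t) ^ 2))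
      (-((S - x) / Real.sqrt (1 + (S - x) ^ 2))) x := by
  have hpos : (0:ℝ) < 1 + (S - x) ^ 2 := by positivity
  have h1 : HasDerivAt (fun t => 1 + (S - t) ^ 2) (2 * (S - x) * (-1)) x := by
    have h0 : HasDerivAt (fun t : ℝ => S - t) (-1) x := (hasDerivAt_id x).const_sub S
    simpa using (h0.pow 2).const_add 1
  have := (Real.hasDerivAt_sqrt hpos.ne').comp x h1
  refine this.congr_deriv ?_
  have hs : 0 < Real.sqrt (1 + (S - x) ^ 2) := Real.sqrt_pos.mpr hpos
  field_simp

private lemma psi_lt_aux (S e d : ℝ) (he : 0 ≤ e) (hed : e < d) :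
    Real.sqrt (1 + (S + e) ^ 2) + Real.sqrt (1 + (S - e) ^ 2) <
      Real.sqrt (1 + (S + d) ^ 2) + Real.sqrt (1 + (S - d) ^ 2) := by
  have hmono : StrictMonoOn
      (fun t => Real.sqrt (1 + (S + t) ^ 2) + Real.sqrt (1 + (S - t) ^ 2)) (Set.Ici 0) := by
    apply strictMonoOn_of_deriv_pos (convex_Ici 0)
    · apply Continuous.continuousOn; fun_prop
    · intro x hx
      rw [interior_Ici] at hx
      have hd := (sqrt_comp_hasDerivAt_aux S x).add (sqrt_comp_hasDerivAt'_aux S x)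
      erw [hd.deriv]
      have := wmono_aux (S - x) (S + x) (by linarith [hx.out])
      linarith
  exact hmono he (le_trans he hed.le) hed

private lemma reduce_aux (p q S a b : ℝ) (hq : p * (a + b) + q = S) :
    (∫ x in a..b, Real.sqrt (1 + (2 * p * x + q) ^ 2)) =
      ∫ u in (0:ℝ)..((b - a) / 2),
        (Real.sqrt (1 + (S + 2 * p * u) ^ 2) + Real.sqrt (1 + (S - 2 * p * u) ^ 2)) := by
  have hfe : (fun x => Real.sqrt (1 + (2 * p * x + q) ^ 2)) =
      fun x => Real.sqrt (1 + (S + 2 * p * (x - (a + b) / 2)) ^ 2) := by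
    funext x
    rw [show 2 * p * x + q = S + 2 * p * (x - (a + b) / 2) by linear_combination hq]
  rw [hfe]
  have h1 : (∫ x in a..b, Real.sqrt (1 + (S + 2 * p * (x - (a + b) / 2)) ^ 2)) =
      ∫ x in (-(( b - a) / 2))..((b - a) / 2), Real.sqrt (1 + (S + 2 * p * x) ^ 2) := by
    rw [intervalIntegral.integral_comp_sub_right
      (fun x => Real.sqrt (1 + (S + 2 * p * x) ^ 2)) ((a + b) / 2)]
    rw [show a - (a + b) / 2 = -((b - a) / 2) from by ring,
      show b - (a + b) / 2 = (b - a) / 2 from by ring]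
  rw [h1]
  have hint : ∀ c d : ℝ, IntervalIntegrable
      (fun x => Real.sqrt (1 + (S + 2 * p * x) ^ 2)) MeasureTheory.volume c d := by
    intro c d
    apply Continuous.intervalIntegrable
    fun_prop
  have h2 : (∫ x in (-((b - a) / 2))..((b - a) / 2), Real.sqrt (1 + (S + 2 * p * x) ^ 2)) =
      (∫ x in (-((b - a) / 2))..(0:ℝ), Real.sqrt (1 + (S + 2 * p * x) ^ 2)) +
        ∫ x in (0:ℝ)..((b - a) / 2), Real.sqrt (1 + (S + 2 * p * x) ^ 2) :=
    (intervalIntegral.integral_add_adjacent_intervals (hint _ _) (hint _ _)).symm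
  rw [h2]
  have h3 : (∫ x in (-((b - a) / 2))..(0:ℝ), Real.sqrt (1 + (S + 2 * p * x) ^ 2)) =
      ∫ x in (0:ℝ)..((b - a) / 2), Real.sqrt (1 + (S - 2 * p * x) ^ 2) := by
    have := intervalIntegral.integral_comp_neg (a := (0:ℝ)) (b := (b - a) / 2)
      (fun x => Real.sqrt (1 + (S + 2 * p * x) ^ 2))
    simp only [neg_zero] at this
    rw [← this]
    congr 1
    funext x
    ring_nf
  rw [h3, ← intervalIntegral.integral_add (by apply Continuous.intervalIntegrable; fun_prop)
    (by apply Continuous.intervalIntegrable; fun_prop)]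
  congr 1
  funext x
  ring_nf

theorem lower_leading_coeff_longer_parabola
    (xA yA xB yB p1 q1 r1 p2 q2 r2 : ℝ) (hx : xA < xB)
    (hp : p1 < p2) (hp2 : p2 ≤ 0)
    (f1 f2 : ℝ → ℝ)
    (hf1 : ∀ x, f1 x = p1 * x ^ 2 + q1 * x + r1)
    (hf2 : ∀ x, f2 x = p2 * x ^ 2 + q2 * x + r2)
    (hA1 : f1 xA = yA) (hA2 : f2 xA = yA)
    (hB1 : f1 xB = yB) (hB2 : f2 xB = yB) :
    (∫ x in xA..xB, Real.sqrt (1 + (2 * p2 * x + q2) ^ 2)) <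
      ∫ x in xA..xB, Real.sqrt (1 + (2 * p1 * x + q1) ^ 2) := by
  rw [hf1 xA] at hA1; rw [hf1 xB] at hB1; rw [hf2 xA] at hA2; rw [hf2 xB] at hB2
  set S : ℝ := p1 * (xA + xB) + q1 with hS
  have hS1 : p1 * (xA + xB) + q1 = S := rfl
  have hS2 : p2 * (xA + xB) + q2 = S := by
    have hkey : (p2 * (xA + xB) + q2 - S) * (xB - xA) = 0 := by
      rw [hS]; linear_combination hA1 - hA2 - hB1 + hB2
    rcases mul_eq_zero.mp hkey with h | h
    · linarith [sub_eq_zero.mp h]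
    · exact absurd (sub_eq_zero.mp h) (ne_of_gt hx)
  rw [reduce_aux p1 q1 S xA xB hS1, reduce_aux p2 q2 S xA xB hS2]
  have hh : (0:ℝ) < (xB - xA) / 2 := by linarith
  apply intervalIntegral.integral_lt_integral_of_continuousOn_of_le_of_exists_lt hh
  · apply Continuous.continuousOn; fun_prop
  · apply Continuous.continuousOn; fun_prop
  · intro u hu
    have hu0 : 0 < u := hu.1
    have h1 : (0:ℝ) ≤ -(2 * p2 * u) := by nlinarith
    have h2 : -(2 * p2 * u) < -(2 * p1 * u) := by nlinarith
    have := psi_lt_aux S (-(2 * p2 * u)) (-(2 * p1 * u)) h1 h2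
    rw [show S + -(2 * p2 * u) = S - 2 * p2 * u from by ring,
      show S - -(2 * p2 * u) = S + 2 * p2 * u from by ring,
      show S + -(2 * p1 * u) = S - 2 * p1 * u from by ring,
      show S - -(2 * p1 * u) = S + 2 * p1 * u from by ring] at this
    linarith
  · refine ⟨(xB - xA) / 2, ⟨hh.le, le_refl _⟩, ?_⟩
    set u := (xB - xA) / 2
    have hu0 : 0 < u := hh
    have h1 : (0:ℝ) ≤ -(2 * p2 * u) := by nlinarith
    have h2 : -(2 * p2 * u) < -(2 * p1 * u) := by nlinarith
    have := psi_lt_aux S (-(2 * p2 * u)) (-(2 * p1 * u)) h1 h2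
    rw [show S + -(2 * p2 * u) = S - 2 * p2 * u from by ring,
      show S - -(2 * p2 * u) = S + 2 * p2 * u from by ring,
      show S + -(2 * p1 * u) = S - 2 * p1 * u from by ring,
      show S - -(2 * p1 * u) = S + 2 * p1 * u from by ring] at this
    linarith
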